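/- Let R be a finite monadic convergent SRS over a finite alphabet Σ, and let μ, X, Y be irreducible strings with X ≠ Y. Then μ·X ↓_R μ·Y if and only if there exist strings X', Y', W, γ such that: (1) γ ∈ MP(μ); (2) X = X'·W, Y = Y'·W, and X' ≠ Y'; and (3) μ·X' →!_R γ and μ·Y' →!_R γ. -/

import Mathlib

/- Strings over an alphabet `σ` are modelled as `List σ`; a finite string
rewriting system is a finite list of rules `(l, r)`. -/

namespace SRS

variable {σ : Type*}

/-- One-step rewrite relation: `u →_R v`. -/
def Step (R : List (List σ × List σ)) (u v : List σ) : Prop :=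
  ∃ x y l r, (l, r) ∈ R ∧ u = x ++ l ++ y ∧ v = x ++ r ++ y

/-- `u →*_R v`: reflexive-transitive closure. -/
def Reduces (R : List (List σ × List σ)) : List σ → List σ → Prop :=
  Relation.ReflTransGen (Step R)

/-- `u ↔*_R v`: reflexive-symmetric-transitive closure. -/
def Equiv (R : List (List σ × List σ)) : List σ → List σ → Prop :=
  Relation.EqvGen (Step R)

/-- `u ↓_R v`: joinability, i.e. a common reduct exists. -/
def Joins (R : List (List σ × List σ)) : List σ → List σ → Prop :=
  Relation.Join (Reduces R)

/-- A string is irreducible if no rule applies to it. -/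
def Irreducible (R : List (List σ × List σ)) (u : List σ) : Prop :=
  ∀ v, ¬ Step R u v

/-- `u →!_R v`: `v` is an `R`-normal form of `u`. -/
def NormalizesTo (R : List (List σ × List σ)) (u v : List σ) : Prop :=
  Reduces R u v ∧ Irreducible R v

/-- Terminating: no infinite chain of rewrite steps. -/
def Terminating (R : List (List σ × List σ)) : Prop :=
  ¬ ∃ f : ℕ → List σ, ∀ n, Step R (f n) (f (n + 1))

def Confluent (R : List (List σ × List σ)) : Prop :=
  ∀ t s₁ s₂, Reduces R t s₁ → Reduces R t s₂ →
    ∃ t', Reduces R s₁ t' ∧ Reduces R s₂ t'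

def Convergent (R : List (List σ × List σ)) : Prop :=
  Terminating R ∧ Confluent R

/-- Dwindling: every right-hand side is a proper prefix of its left-hand side. -/
def Dwindling (R : List (List σ × List σ)) : Prop :=
  ∀ p ∈ R, p.2 <+: p.1 ∧ p.2 ≠ p.1

/-- Monadic: length-reducing with right-hand sides of length at most 1. -/
def Monadic (R : List (List σ × List σ)) : Prop :=
  ∀ p ∈ R, p.2.length < p.1.length ∧ p.2.length ≤ 1

/-- `MP α`: normal forms of `p ++ s` with `p` a prefix of `α` and `s` a single
symbol or the empty string. -/
def MP (R : List (List σ × List σ)) (α : List σ) : Set (List σ) :=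
  { γ | ∃ p s, p <+: α ∧ s.length ≤ 1 ∧ NormalizesTo R (p ++ s) γ }

end SRS

namespace SRSAux
open SRS
variable {σ : Type*} {R : List (List σ × List σ)}

lemma step_append_right {u v : List σ} (w : List σ) (h : Step R u v) :
    Step R (u ++ w) (v ++ w) := by
  obtain ⟨x, y, l, r, hlr, hu, hv⟩ := h
  exact ⟨x, y ++ w, l, r, hlr, by simp [hu], by simp [hv]⟩

lemma step_append_left {u v : List σ} (w : List σ) (h : Step R u v) :
    Step R (w ++ u) (w ++ v) := by
  obtain ⟨x, y, l, r, hlr, hu, hv⟩ := h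
  exact ⟨w ++ x, y, l, r, hlr, by simp [hu], by simp [hv]⟩

lemma reduces_append_right {u v : List σ} (w : List σ) (h : Reduces R u v) :
    Reduces R (u ++ w) (v ++ w) :=
  h.lift (· ++ w) (fun _ _ h => step_append_right w h)

lemma irreducible_of_prefix {u w : List σ} (hp : u <+: w) (h : Irreducible R w) :
    Irreducible R u := by
  obtain ⟨t, rfl⟩ := hp
  intro v hv
  exact h (v ++ t) (step_append_right t hv)

lemma irreducible_of_suffix {u w : List σ} (hp : u <:+ w) (h : Irreducible R w) :
    Irreducible R u := by
  obtain ⟨t, rfl⟩ := hp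
  intro v hv
  exact h (t ++ v) (step_append_left t hv)

lemma exists_normalizesTo (hT : Terminating R) (u : List σ) :
    ∃ v, NormalizesTo R u v := by
  by_contra h
  simp only [NormalizesTo, not_exists, not_and] at h
  have key : ∀ w : List σ, Reduces R u w → ∃ w', Step R w w' := by
    intro w hw
    by_contra h2
    push_neg at h2
    exact h w hw (fun v hv => h2 v hv)
  choose g hg using key
  apply hT
  let F : ℕ → {w : List σ // Reduces R u w} := fun n =>
    Nat.rec ⟨u, Relation.ReflTransGen.refl⟩
      (fun _ p => ⟨g p.1 p.2, p.2.tail (hg p.1 p.2)⟩) n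
  exact ⟨fun n => (F n).1, fun n => hg (F n).1 (F n).2⟩

lemma reduces_eq_of_irreducible {u v : List σ} (hu : Irreducible R u)
    (h : Reduces R u v) : v = u := by
  rcases Relation.ReflTransGen.cases_head h with h | ⟨c, hc, _⟩
  · exact h.symm
  · exact absurd hc (hu c)

/-- Key structural invariant: every reduct of `μ ++ X` with `μ, X` irreducible has
the form `(p ++ s) ++ Z` with `p` a prefix of `μ`, `|s| ≤ 1`, `Z` a suffix of `X`. -/
lemma invariant (hmon : Monadic R) {μ X : List σ} (hμ : Irreducible R μ)
    (hX : Irreducible R X) {N : List σ} (h : Reduces R (μ ++ X) N) :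
    ∃ p s X₁ Z, p <+: μ ∧ s.length ≤ 1 ∧ X = X₁ ++ Z ∧ N = (p ++ s) ++ Z ∧
      Reduces R (μ ++ X₁) (p ++ s) := by
  induction h with
  | refl =>
    exact ⟨μ, [], [], X, List.prefix_refl μ, by simp, by simp, by simp,
      by simp only [List.append_nil]; exact Relation.ReflTransGen.refl⟩
  | tail h1 h2 ih =>
    obtain ⟨p, s, X₁, Z, hpμ, hs, hXZ, hM, hred⟩ := ih
    obtain ⟨x, y, l, r, hlr, hMx, hN⟩ := h2
    have hrl : r.length < l.length := (hmon _ hlr).1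
    have hr1 : r.length ≤ 1 := (hmon _ hlr).2
    have hp : Irreducible R p := irreducible_of_prefix hpμ hμ
    have hZ : Irreducible R Z := irreducible_of_suffix ⟨X₁, hXZ.symm⟩ hX
    have hEq : x ++ l ++ y = (p ++ s) ++ Z := by rw [← hMx, hM]
    have hps : (p ++ s).length = p.length + s.length := by simp
    have hxl_pref : x ++ l <+: (p ++ s) ++ Z := ⟨y, by rw [← hEq]⟩
    have hx_pref : x <+: (p ++ s) ++ Z := ⟨l ++ y, by rw [← hEq]; simp⟩
    by_cases hcase : x.length + l.length ≤ (p ++ s).length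
    · -- redex inside p ++ s
      have hxl : x ++ l <+: p ++ s :=
        List.prefix_of_prefix_length_le hxl_pref (List.prefix_append _ _)
          (by simpa using hcase)
      by_cases hcp : x.length + l.length ≤ p.length
      · -- redex inside p: contradiction
        exfalso
        have hxlp : x ++ l <+: p :=
          List.prefix_of_prefix_length_le hxl (List.prefix_append p s)
            (by simpa using hcp)
        obtain ⟨t, ht⟩ := hxlp
        exact hp (x ++ r ++ t) ⟨x, t, l, r, hlr, ht.symm, rfl⟩
      · -- redex is exactly a suffix of p ++ s ending at s
        have hlen : (x ++ l).length = (p ++ s).length := by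
          simp only [List.length_append] at *
          omega
        have hxlps : x ++ l = p ++ s := hxl.eq_of_length hlen
        have hy : y = Z := by
          have h' := hEq
          rw [hxlps] at h'
          exact List.append_cancel_left h'
        have hxp : x <+: p := by
          refine List.prefix_of_prefix_length_le ⟨l, hxlps⟩ (List.prefix_append p s) ?_
          simp only [List.length_append] at *
          omega
        refine ⟨x, r, X₁, Z, hxp.trans hpμ, hr1, hXZ, by rw [hN, hy], ?_⟩
        exact hred.tail ⟨x, [], l, r, hlr, by simp [← hxlps], by simp⟩
    · -- redex spills past p ++ s
      push_neg at hcase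
      by_cases hcx : (p ++ s).length ≤ x.length
      · -- redex entirely inside Z: contradiction
        exfalso
        have hpsx : p ++ s <+: x :=
          List.prefix_of_prefix_length_le (List.prefix_append _ _) hx_pref hcx
        obtain ⟨x', hx'⟩ := hpsx
        have h' := hEq
        rw [← hx'] at h'
        simp only [List.append_assoc] at h'
        have hZ' : x' ++ (l ++ y) = Z :=
          List.append_cancel_left (List.append_cancel_left h')
        exact hZ (x' ++ r ++ y)
          ⟨x', y, l, r, hlr, by rw [← hZ', List.append_assoc], rfl⟩
      · push_neg at hcx
        have hxps : x <+: p ++ s :=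
          List.prefix_of_prefix_length_le hx_pref (List.prefix_append _ _)
            (by simpa using hcx.le)
        obtain ⟨u, hu⟩ := hxps
        have hulen : x.length + u.length = (p ++ s).length := by
          have := congrArg List.length hu
          simpa using this
        have hly : l ++ y = u ++ Z := by
          have h' := hEq
          rw [← hu] at h'
          simp only [List.append_assoc] at h'
          exact List.append_cancel_left h'
        have hul : u <+: l := by
          refine List.prefix_of_prefix_length_le ⟨Z, hly.symm⟩ ⟨y, rfl⟩ ?_
          omega
        obtain ⟨v, hv⟩ := hul
        have hZvy : Z = v ++ y := by
          have h' := hly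
          rw [← hv, List.append_assoc] at h'
          exact (List.append_cancel_left h').symm
        have hxp : x <+: p := by
          refine List.prefix_of_prefix_length_le ⟨u, hu⟩ (List.prefix_append p s) ?_
          simp only [List.length_append] at *
          omega
        refine ⟨x, r, X₁ ++ v, y, hxp.trans hpμ, hr1, by rw [hXZ, hZvy]; simp,
          by rw [hN], ?_⟩
        have step1 : Reduces R (μ ++ (X₁ ++ v)) ((p ++ s) ++ v) := by
          have := reduces_append_right v hred
          simpa using this
        refine step1.tail ⟨x, [], l, r, hlr, ?_, by simp⟩
        rw [← hu, ← hv]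
        simp

end SRSAux

/-- For a finite monadic convergent SRS `R` and irreducible
strings `μ, X, Y` with `X ≠ Y`:  `μX ↓_R μY` iff there are strings
`X', Y', W, γ` with `γ ∈ MP(μ)`, `X = X'W`, `Y = Y'W`, `X' ≠ Y'`, and
`μX' →!_R γ`, `μY' →!_R γ`. -/

theorem monadic_one_mapping_characterization {σ : Type*} [Fintype σ]
    (R : List (List σ × List σ)) (hmon : SRS.Monadic R) (hconv : SRS.Convergent R)
    (μ X Y : List σ) (hμ : SRS.Irreducible R μ)
    (hX : SRS.Irreducible R X) (hY : SRS.Irreducible R Y) (hXY : X ≠ Y) :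
    SRS.Joins R (μ ++ X) (μ ++ Y) ↔
      ∃ X' Y' W γ : List σ,
        γ ∈ SRS.MP R μ ∧
        X = X' ++ W ∧ Y = Y' ++ W ∧ X' ≠ Y' ∧
        SRS.NormalizesTo R (μ ++ X') γ ∧ SRS.NormalizesTo R (μ ++ Y') γ := by
  constructor
  · rintro ⟨t, htX, htY⟩
    obtain ⟨N, hNt, hNirr⟩ := SRSAux.exists_normalizesTo hconv.1 t
    have hXN : SRS.Reduces R (μ ++ X) N := htX.trans hNt
    have hYN : SRS.Reduces R (μ ++ Y) N := htY.trans hNt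
    obtain ⟨p, s, X₁, Z, hpμ, hs, hXZ, hNX, hredX⟩ :=
      SRSAux.invariant hmon hμ hX hXN
    obtain ⟨q, u, Y₁, Z', hqμ, hu, hYZ, hNY, hredY⟩ :=
      SRSAux.invariant hmon hμ hY hYN
    have hα : SRS.Irreducible R (p ++ s) :=
      SRSAux.irreducible_of_prefix ⟨Z, hNX.symm⟩ hNirr
    have hβ : SRS.Irreducible R (q ++ u) :=
      SRSAux.irreducible_of_prefix ⟨Z', hNY.symm⟩ hNirr
    have hEq : (p ++ s) ++ Z = (q ++ u) ++ Z' := by rw [← hNX, ← hNY]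
    have hZN : Z <:+ N := ⟨p ++ s, hNX.symm⟩
    have hZ'N : Z' <:+ N := ⟨q ++ u, hNY.symm⟩
    rcases le_total Z.length Z'.length with hle | hle
    · obtain ⟨V, hV⟩ := List.suffix_of_suffix_length_le hZN hZ'N hle
      have hαβ : p ++ s = (q ++ u) ++ V := by
        have h' := hEq
        rw [← hV, ← List.append_assoc] at h'
        exact List.append_cancel_right h'
      refine ⟨X₁, Y₁ ++ V, Z, p ++ s,
        ⟨p, s, hpμ, hs, Relation.ReflTransGen.refl, hα⟩, hXZ, ?_, ?_,
        ⟨hredX, hα⟩, ?_⟩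
      · rw [hYZ, ← hV, List.append_assoc]
      · intro contra
        apply hXY
        rw [hXZ, hYZ, contra, ← hV, List.append_assoc]
      · refine ⟨?_, hα⟩
        have h2 := SRSAux.reduces_append_right V hredY
        rw [hαβ]
        simpa [List.append_assoc] using h2
    · obtain ⟨V, hV⟩ := List.suffix_of_suffix_length_le hZ'N hZN hle
      have hαβ : q ++ u = (p ++ s) ++ V := by
        have h' := hEq
        rw [← hV, ← List.append_assoc] at h'
        exact (List.append_cancel_right h').symm
      refine ⟨X₁ ++ V, Y₁, Z', q ++ u,
        ⟨q, u, hqμ, hu, Relation.ReflTransGen.refl, hβ⟩, ?_, hYZ, ?_,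
        ?_, ⟨hredY, hβ⟩⟩
      · rw [hXZ, ← hV, List.append_assoc]
      · intro contra
        apply hXY
        rw [hXZ, hYZ, ← contra, ← hV, List.append_assoc]
      · refine ⟨?_, hβ⟩
        have h2 := SRSAux.reduces_append_right V hredX
        rw [hαβ]
        simpa [List.append_assoc] using h2
  · rintro ⟨X', Y', W, γ, hγ, hXe, hYe, hne, hnx, hny⟩
    refine ⟨γ ++ W, ?_, ?_⟩
    · rw [hXe, ← List.append_assoc]
      exact SRSAux.reduces_append_right W hnx.1
    · rw [hYe, ← List.append_assoc]
      exact SRSAux.reduces_append_right W hny.1
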